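/- For any knot diagram D, u_R(D) is at most half the number of regions of D. -/

import Mathlib

/-!
STATEMENT 11: for any knot diagram `D`, the region unknotting number
`u_R(D)` is at most half the number of regions of `D`.

Corner model of a knot diagram `D` with `n = c(D)` crossings: `corner c i` is
the region at the `i`-th corner (cyclic order) of crossing `c`; adjacent
corners lie in distinct regions.  `col` is a checkerboard coloring (regions at adjacent corners get
different colors), which every diagram admits.  `M` is the corner-parity
region-crossing incidence matrix over `F₂`; region crossing changes at a set
`P` of regions replace the over/under vector `over` by
`over + ∑_{R ∈ P} M R ·`.  `Unknotted v` says that the underlying curve with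
over/under data `v` is a diagram of the trivial knot; the hypothesis
`hunknottable` is the theorem that region crossing changes can unknot `D`.

The region unknotting number `u_R(D)` is the least cardinality of a set of
regions whose region crossing changes turn `D` into a trivial knot diagram.
-/
theorem region_unknotting_number_le_half_number_of_regions
    {n : ℕ} {Region : Type*} [Fintype Region] [DecidableEq Region]
    (corner : Fin n → Fin 4 → Region)
    (hadj : ∀ c i, corner c i ≠ corner c (i + 1))
    (col : Region → Bool)
    (hcol : ∀ c i, col (corner c i) ≠ col (corner c (i + 1)))
    (M : Region → Fin n → ZMod 2)
    (hM : ∀ R c, M R c =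
      ((Finset.univ.filter fun i : Fin 4 => corner c i = R).card : ZMod 2))
    (overV : Fin n → ZMod 2)
    (Unknotted : (Fin n → ZMod 2) → Prop)
    (hunknottable : ∃ S : Finset Region,
      Unknotted (fun c => overV c + ∑ R ∈ S, M R c)) :
    ((sInf {k : ℕ | ∃ P : Finset Region, P.card = k ∧
        Unknotted (fun c => overV c + ∑ R ∈ P, M R c)} : ℕ) : ℚ)
      ≤ (Fintype.card Region : ℚ) / 2 := by
  classical
  obtain ⟨S, hS⟩ := hunknottable
  -- the sum of M over a whole color class is 0 at every crossing
  have key : ∀ (b : Bool) (c : Fin n),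
      ∑ R ∈ Finset.univ.filter (fun R => col R = b), M R c = 0 := by
    intro b c
    have hMc : ∀ R, M R c = ∑ i : Fin 4, if corner c i = R then (1 : ZMod 2) else 0 := by
      intro R
      rw [hM, Finset.card_filter]
      push_cast
      rfl
    calc ∑ R ∈ Finset.univ.filter (fun R => col R = b), M R c
        = ∑ R ∈ Finset.univ.filter (fun R => col R = b),
            ∑ i : Fin 4, if corner c i = R then (1 : ZMod 2) else 0 := by
          exact Finset.sum_congr rfl fun R _ => hMc R
      _ = ∑ i : Fin 4, ∑ R ∈ Finset.univ.filter (fun R => col R = b),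
            if corner c i = R then (1 : ZMod 2) else 0 := Finset.sum_comm
      _ = ∑ i : Fin 4, if col (corner c i) = b then (1 : ZMod 2) else 0 := by
          refine Finset.sum_congr rfl fun i _ => ?_
          rw [Finset.sum_ite_eq]
          simp
      _ = 0 := by
          have hbool : ∀ x y z : Bool, x ≠ y → y ≠ z → x = z := by decide
          have e2 : col (corner c 2) = col (corner c 0) :=
            (hbool _ _ _ (hcol c 0) (hcol c 1)).symm
          have e3 : col (corner c 3) = col (corner c 1) :=
            (hbool _ _ _ (hcol c 1) (hcol c 2)).symm
          rw [Fin.sum_univ_four]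
          norm_num
          rw [e2, e3]
          split_ifs <;> decide
  -- complementing within a color class preserves the sum
  have comp : ∀ (b : Bool) (T : Finset Region),
      T ⊆ Finset.univ.filter (fun R => col R = b) →
      ∀ c, ∑ R ∈ (Finset.univ.filter (fun R => col R = b)) \ T, M R c
          = ∑ R ∈ T, M R c := by
    intro b T hT c
    have h := Finset.sum_sdiff (f := fun R => M R c) hT
    rw [key b c] at h
    have : ∀ a d : ZMod 2, a + d = 0 → a = d := by decide
    exact this _ _ h
  set B := Finset.univ.filter (fun R => col R = true) with hB
  set W := Finset.univ.filter (fun R => col R = false) with hW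
  set Sb := S.filter (fun R => col R = true) with hSb
  set Sw := S.filter (fun R => col R = false) with hSw
  have hSbB : Sb ⊆ B := by intro x hx; simp [hSb, hB] at hx ⊢; exact hx.2
  have hSwW : Sw ⊆ W := by intro x hx; simp [hSw, hW] at hx ⊢; exact hx.2
  set Pb := if 2 * Sb.card ≤ B.card then Sb else B \ Sb with hPb
  set Pw := if 2 * Sw.card ≤ W.card then Sw else W \ Sw with hPw
  have hPbB : Pb ⊆ B := by
    rw [hPb]; split_ifs
    · exact hSbB
    · exact Finset.sdiff_subset
  have hPwW : Pw ⊆ W := by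
    rw [hPw]; split_ifs
    · exact hSwW
    · exact Finset.sdiff_subset
  have hsumb : ∀ c, ∑ R ∈ Pb, M R c = ∑ R ∈ Sb, M R c := by
    intro c; rw [hPb]; split_ifs
    · rfl
    · exact comp true Sb hSbB c
  have hsumw : ∀ c, ∑ R ∈ Pw, M R c = ∑ R ∈ Sw, M R c := by
    intro c; rw [hPw]; split_ifs
    · rfl
    · exact comp false Sw hSwW c
  have hdisjBW : Disjoint B W := by
    simp only [hB, hW, Finset.disjoint_filter]
    intro x _ h; simp [h]
  have hdisj : Disjoint Pb Pw := hdisjBW.mono hPbB hPwW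
  set P := Pb ∪ Pw with hP
  have hPsum : ∀ c, ∑ R ∈ P, M R c = ∑ R ∈ S, M R c := by
    intro c
    rw [hP, Finset.sum_union hdisj, hsumb, hsumw, hSb, hSw,
      ← Finset.sum_filter_add_sum_filter_not S (fun R => col R = true)]
    congr 1
    apply Finset.sum_congr _ fun _ _ => rfl
    ext x; simp
  have hPunk : Unknotted (fun c => overV c + ∑ R ∈ P, M R c) := by
    have heq : (fun c => overV c + ∑ R ∈ P, M R c)
        = (fun c => overV c + ∑ R ∈ S, M R c) := by
      funext c; rw [hPsum]
    rw [heq]; exact hS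
  have hmem : P.card ∈ {k : ℕ | ∃ Q : Finset Region, Q.card = k ∧
      Unknotted (fun c => overV c + ∑ R ∈ Q, M R c)} := ⟨P, rfl, hPunk⟩
  have hinf : sInf {k : ℕ | ∃ Q : Finset Region, Q.card = k ∧
      Unknotted (fun c => overV c + ∑ R ∈ Q, M R c)} ≤ P.card := Nat.sInf_le hmem
  -- cardinality bound: 2 * P.card ≤ card Region
  have hcardb : 2 * Pb.card ≤ B.card := by
    rw [hPb]; split_ifs with h
    · exact h
    · have h1 : Sb.card ≤ B.card := Finset.card_le_card hSbB
      rw [Finset.card_sdiff_of_subset hSbB]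
      omega
  have hcardw : 2 * Pw.card ≤ W.card := by
    rw [hPw]; split_ifs with h
    · exact h
    · have h1 : Sw.card ≤ W.card := Finset.card_le_card hSwW
      rw [Finset.card_sdiff_of_subset hSwW]
      omega
  have hBW : B.card + W.card = Fintype.card Region := by
    have hWeq : W = Finset.univ.filter (fun R => ¬ col R = true) := by
      ext x; simp [hW]
    rw [hB, hWeq, Finset.card_filter_add_card_filter_not, Finset.card_univ]
  have hPcard : 2 * P.card ≤ Fintype.card Region := by
    have := Finset.card_union_le Pb Pw
    rw [hP]
    omega
  calc ((sInf _ : ℕ) : ℚ) ≤ (P.card : ℚ) := by exact_mod_cast hinf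
    _ ≤ (Fintype.card Region : ℚ) / 2 := by
        rw [le_div_iff₀ (by norm_num)]
        have : ((2 * P.card : ℕ) : ℚ) ≤ ((Fintype.card Region : ℕ) : ℚ) := by
          exact_mod_cast hPcard
        push_cast at this ⊢
        linarith
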